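/- Suppose a and B satisfy the componentwise linear growth bound |a^d(x)| ≤ C(1 + ‖x‖₂) and |B^{d,m}(x)| ≤ C(1 + ‖x‖₂) for all x, d, m, with C > 0. Let ζ : Ω → ℝ^M have components with E[ζ^m] = 0, E[(ζ^m)²] = 1, and E[ζ^m ζ^n] = 0 for m ≠ n, and let ψ : Ω → ℝ^M be square-integrable with E[ψ] = 0 and |E[ψ^m ψ^n]| ≤ S for all m, n, where S > 0. Then there exists a constant C' > 0 such that for all 0 < ε < 1, all y ∈ ℝ^D, and all d₁, d₂ = 1,…,D, |E[Δ_ζ^{d₁} Δ_ζ^{d₂} − Δ_ψ^{d₁} Δ_ψ^{d₂}]| ≤ C'(1 + ‖y‖₂²) ε. That is, a scheme whose noise is constrained only in its first moment matches the second moments of the Euler–Maruyama one-step increment only to order ε (rather than ε²). -/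

import Mathlib

open MeasureTheory ProbabilityTheory
open scoped BigOperators

section Aux
variable {Ω : Type*} [MeasureSpace Ω] [IsProbabilityMeasure (ℙ : Measure Ω)]

lemma aux_int_mul {f g : Ω → ℝ} (hf : MemLp f 2) (hg : MemLp g 2) :
    Integrable (fun ω => f ω * g ω) := by
  refine (hf.integrable_sq.add hg.integrable_sq).mono' (hf.1.mul hg.1)
    (Filter.Eventually.of_forall fun ω => ?_)
  have : ‖f ω * g ω‖ = |f ω| * |g ω| := by rw [Real.norm_eq_abs, abs_mul]
  rw [this, Pi.add_apply]
  nlinarith [sq_nonneg (|f ω| - |g ω|), sq_abs (f ω), sq_abs (g ω), sq_nonneg (f ω), sq_nonneg (g ω)]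

lemma aux_sum_memLp {M : ℕ} (c : Fin M → ℝ) {χ : Ω → Fin M → ℝ}
    (hχ : ∀ m, MemLp (fun ω => χ ω m) 2) :
    MemLp (fun ω => ∑ m, c m * χ ω m) 2 := by
  have := memLp_finset_sum' (μ := (ℙ : Measure Ω)) (p := 2) Finset.univ
    (f := fun m (ω : Ω) => c m * χ ω m) (fun m _ => (hχ m).const_mul (c m))
  have e : (fun ω => ∑ m, c m * χ ω m) = ∑ m : Fin M, fun ω => c m * χ ω m := by
    funext ω; simp
  rw [e]; exact this

lemma aux_expand {M : ℕ} (c₁ c₂ : Fin M → ℝ) (A₁ A₂ ε : ℝ) (hε : 0 ≤ ε)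
    {χ : Ω → Fin M → ℝ} (hχ : ∀ m, MemLp (fun ω => χ ω m) 2)
    (hχ1 : ∀ m, (∫ ω, χ ω m) = 0) :
    (∫ ω, (ε * A₁ + Real.sqrt ε * ∑ m, c₁ m * χ ω m)
        * (ε * A₂ + Real.sqrt ε * ∑ m, c₂ m * χ ω m))
      = ε ^ 2 * A₁ * A₂ + ε * ∑ m, ∑ n, c₁ m * c₂ n * ∫ ω, χ ω m * χ ω n := by
  have h1 : MemLp (fun ω => ∑ m, c₁ m * χ ω m) 2 := aux_sum_memLp c₁ hχ
  have h2 : MemLp (fun ω => ∑ m, c₂ m * χ ω m) 2 := aux_sum_memLp c₂ hχ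
  have hI1 : Integrable (fun ω => ∑ m, c₁ m * χ ω m) := h1.integrable one_le_two
  have hI2 : Integrable (fun ω => ∑ m, c₂ m * χ ω m) := h2.integrable one_le_two
  have hI12 : Integrable (fun ω => (∑ m, c₁ m * χ ω m) * (∑ m, c₂ m * χ ω m)) :=
    aux_int_mul h1 h2
  set s := Real.sqrt ε with hsdef
  have hsq : s * s = ε := Real.mul_self_sqrt hε
  have key : ∀ ω, (ε * A₁ + s * ∑ m, c₁ m * χ ω m)
        * (ε * A₂ + s * ∑ m, c₂ m * χ ω m)
      = ε ^ 2 * A₁ * A₂ + (ε * A₁ * s) * (∑ m, c₂ m * χ ω m)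
        + (ε * A₂ * s) * (∑ m, c₁ m * χ ω m)
        + ε * ((∑ m, c₁ m * χ ω m) * (∑ m, c₂ m * χ ω m)) := by
    intro ω; rw [← hsq]; ring
  rw [integral_congr_ae (Filter.Eventually.of_forall key)]
  have hA2 : Integrable (fun ω => ε ^ 2 * A₁ * A₂ + ε * A₁ * s * ∑ m, c₂ m * χ ω m) :=
    (integrable_const _).add (hI2.const_mul _)
  have hA3 : Integrable (fun ω => ε ^ 2 * A₁ * A₂ + ε * A₁ * s * ∑ m, c₂ m * χ ω m
      + ε * A₂ * s * ∑ m, c₁ m * χ ω m) := hA2.add (hI1.const_mul _)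
  rw [integral_add hA3 (hI12.const_mul ε), integral_add hA2 (hI1.const_mul _),
    integral_add (integrable_const _) (hI2.const_mul _),
    integral_const_mul (ε * A₁ * s), integral_const_mul (ε * A₂ * s), integral_const_mul ε]
  have hz1 : (∫ ω, ∑ m, c₁ m * χ ω m) = 0 := by
    rw [integral_finset_sum _ fun m _ => ((hχ m).integrable one_le_two).const_mul (c₁ m)]
    simp [integral_const_mul, hχ1]
  have hz2 : (∫ ω, ∑ m, c₂ m * χ ω m) = 0 := by
    rw [integral_finset_sum _ fun m _ => ((hχ m).integrable one_le_two).const_mul (c₂ m)]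
    simp [integral_const_mul, hχ1]
  have hprod : (∫ ω, (∑ m, c₁ m * χ ω m) * (∑ m, c₂ m * χ ω m))
      = ∑ m, ∑ n, c₁ m * c₂ n * ∫ ω, χ ω m * χ ω n := by
    have e : ∀ ω, (∑ m, c₁ m * χ ω m) * (∑ n, c₂ n * χ ω n)
        = ∑ m, ∑ n, c₁ m * c₂ n * (χ ω m * χ ω n) := by
      intro ω; rw [Finset.sum_mul_sum]
      exact Finset.sum_congr rfl fun m _ => Finset.sum_congr rfl fun n _ => by ring
    rw [integral_congr_ae (Filter.Eventually.of_forall e)]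
    rw [integral_finset_sum _ fun m _ => integrable_finset_sum _ fun n _ =>
      (aux_int_mul (hχ m) (hχ n)).const_mul _]
    refine Finset.sum_congr rfl fun m _ => ?_
    rw [integral_finset_sum _ fun n _ => (aux_int_mul (hχ m) (hχ n)).const_mul _]
    exact Finset.sum_congr rfl fun n _ => integral_const_mul _ _
  rw [hz1, hz2, hprod]
  simp [measure_univ]

end Aux

/-- if the noise `ψ` is constrained only in its first moment (with
second moments merely bounded by `S`), then the second moments of its one-step
increment match those of the Euler–Maruyama increment (noise `ζ`) only to order
`ε`: `|E[Δ_ζ^{d₁} Δ_ζ^{d₂} − Δ_ψ^{d₁} Δ_ψ^{d₂}]| ≤ C'(1 + ‖y‖₂²) ε`. -/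
theorem first_moment_only_scheme_order_eps
    (D M : ℕ) (hD : 1 ≤ D) (hM : 1 ≤ M)
    (a : EuclideanSpace ℝ (Fin D) → Fin D → ℝ)
    (B : EuclideanSpace ℝ (Fin D) → Fin D → Fin M → ℝ)
    (C : ℝ) (hC : 0 < C)
    (ha : ∀ x d, |a x d| ≤ C * (1 + ‖x‖))
    (hB : ∀ x d m, |B x d m| ≤ C * (1 + ‖x‖))
    (Ω : Type*) [MeasureSpace Ω] [IsProbabilityMeasure (ℙ : Measure Ω)]
    (ζ ψ : Ω → Fin M → ℝ)
    (hζL2 : ∀ m, MemLp (fun ω => ζ ω m) 2)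
    (hψL2 : ∀ m, MemLp (fun ω => ψ ω m) 2)
    (hζ1 : ∀ m, (∫ ω, ζ ω m) = 0)
    (hζ2 : ∀ m, (∫ ω, (ζ ω m) ^ 2) = 1)
    (hζc : ∀ m n, m ≠ n → (∫ ω, ζ ω m * ζ ω n) = 0)
    (hψ1 : ∀ m, (∫ ω, ψ ω m) = 0)
    (S : ℝ) (hS : 0 < S)
    (hψ2 : ∀ m n, |∫ ω, ψ ω m * ψ ω n| ≤ S) :
    ∃ C' : ℝ, 0 < C' ∧ ∀ ε : ℝ, 0 < ε → ε < 1 →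
      ∀ y : EuclideanSpace ℝ (Fin D), ∀ d₁ d₂ : Fin D,
        |∫ ω, ((ε * a y d₁ + Real.sqrt ε * ∑ m, B y d₁ m * ζ ω m)
             * (ε * a y d₂ + Real.sqrt ε * ∑ m, B y d₂ m * ζ ω m)
             - (ε * a y d₁ + Real.sqrt ε * ∑ m, B y d₁ m * ψ ω m)
             * (ε * a y d₂ + Real.sqrt ε * ∑ m, B y d₂ m * ψ ω m))|
          ≤ C' * (1 + ‖y‖ ^ 2) * ε := by
  refine ⟨2 * C ^ 2 * (M + S * M ^ 2), by positivity, fun ε hε hε1 y d₁ d₂ => ?_⟩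
  set c₁ := fun m => B y d₁ m with hc₁
  set c₂ := fun m => B y d₂ m with hc₂
  have hεle : (0:ℝ) ≤ ε := hε.le
  -- split the integral of the difference
  have hterm : ∀ (χ : Ω → Fin M → ℝ), (∀ m, MemLp (fun ω => χ ω m) 2) →
      Integrable (fun ω => (ε * a y d₁ + Real.sqrt ε * ∑ m, c₁ m * χ ω m)
        * (ε * a y d₂ + Real.sqrt ε * ∑ m, c₂ m * χ ω m)) := by
    intro χ hχ
    have h1 : MemLp (fun ω => ε * a y d₁ + Real.sqrt ε * ∑ m, c₁ m * χ ω m) 2 :=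
      (memLp_const (ε * a y d₁)).add ((aux_sum_memLp c₁ hχ).const_mul (Real.sqrt ε))
    have h2 : MemLp (fun ω => ε * a y d₂ + Real.sqrt ε * ∑ m, c₂ m * χ ω m) 2 :=
      (memLp_const (ε * a y d₂)).add ((aux_sum_memLp c₂ hχ).const_mul (Real.sqrt ε))
    exact aux_int_mul h1 h2
  rw [integral_sub (hterm ζ hζL2) (hterm ψ hψL2),
    aux_expand c₁ c₂ (a y d₁) (a y d₂) ε hεle hζL2 hζ1,
    aux_expand c₁ c₂ (a y d₁) (a y d₂) ε hεle hψL2 hψ1]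
  have hδ : ∀ m n, (∫ ω, ζ ω m * ζ ω n) = if m = n then 1 else 0 := by
    intro m n
    by_cases h : m = n
    · subst h; simp only [if_pos rfl]
      simpa [pow_two] using hζ2 m
    · simp [h, hζc m n h]
  have hK : (0:ℝ) ≤ C * (1 + ‖y‖) := by positivity
  have hcb : ∀ m, |c₁ m| ≤ C * (1 + ‖y‖) := fun m => hB y d₁ m
  have hcb2 : ∀ m, |c₂ m| ≤ C * (1 + ‖y‖) := fun m => hB y d₂ m
  -- bound the ζ double sum
  have hζsum : |∑ m, ∑ n, c₁ m * c₂ n * ∫ ω, ζ ω m * ζ ω n|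
      ≤ M * (C * (1 + ‖y‖)) ^ 2 := by
    have : (∑ m, ∑ n, c₁ m * c₂ n * ∫ ω, ζ ω m * ζ ω n) = ∑ m, c₁ m * c₂ m := by
      refine Finset.sum_congr rfl fun m _ => ?_
      rw [Finset.sum_eq_single m]
      · simp [hδ]
      · intro n _ hn; simp [hδ, (Ne.symm hn)]
      · simp
    rw [this]
    calc |∑ m, c₁ m * c₂ m| ≤ ∑ m, |c₁ m * c₂ m| := Finset.abs_sum_le_sum_abs _ _
      _ ≤ ∑ _m : Fin M, (C * (1 + ‖y‖)) ^ 2 := by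
          refine Finset.sum_le_sum fun m _ => ?_
          rw [abs_mul, pow_two]
          exact mul_le_mul (hcb m) (hcb2 m) (abs_nonneg _) hK
      _ = M * (C * (1 + ‖y‖)) ^ 2 := by simp [mul_comm]
  have hψsum : |∑ m, ∑ n, c₁ m * c₂ n * ∫ ω, ψ ω m * ψ ω n|
      ≤ S * M ^ 2 * (C * (1 + ‖y‖)) ^ 2 := by
    calc |∑ m, ∑ n, c₁ m * c₂ n * ∫ ω, ψ ω m * ψ ω n|
        ≤ ∑ m, ∑ n, |c₁ m * c₂ n * ∫ ω, ψ ω m * ψ ω n| := by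
          refine (Finset.abs_sum_le_sum_abs _ _).trans ?_
          exact Finset.sum_le_sum fun m _ => Finset.abs_sum_le_sum_abs _ _
      _ ≤ ∑ _m : Fin M, ∑ _n : Fin M, (C * (1 + ‖y‖)) ^ 2 * S := by
          refine Finset.sum_le_sum fun m _ => Finset.sum_le_sum fun n _ => ?_
          rw [abs_mul, abs_mul]
          calc |c₁ m| * |c₂ n| * |∫ ω, ψ ω m * ψ ω n|
              ≤ (C * (1 + ‖y‖)) * (C * (1 + ‖y‖)) * S := by
                refine mul_le_mul (mul_le_mul (hcb m) (hcb2 n) (abs_nonneg _) hK)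
                  (hψ2 m n) (abs_nonneg _) (by positivity)
            _ = (C * (1 + ‖y‖)) ^ 2 * S := by ring
      _ = S * M ^ 2 * (C * (1 + ‖y‖)) ^ 2 := by simp; ring
  have hsq2 : (1 + ‖y‖) ^ 2 ≤ 2 * (1 + ‖y‖ ^ 2) := by
    nlinarith [sq_nonneg (1 - ‖y‖), norm_nonneg y]
  have hbound : |∑ m, ∑ n, c₁ m * c₂ n * (∫ ω, ζ ω m * ζ ω n)
      - ∑ m, ∑ n, c₁ m * c₂ n * (∫ ω, ψ ω m * ψ ω n)|
      ≤ (M + S * M ^ 2) * (C * (1 + ‖y‖)) ^ 2 := by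
    refine (abs_sub _ _).trans ?_
    have := add_le_add hζsum hψsum
    linarith
  have hfinal : (ε ^ 2 * a y d₁ * a y d₂ + ε * ∑ m, ∑ n, c₁ m * c₂ n * ∫ ω, ζ ω m * ζ ω n)
      - (ε ^ 2 * a y d₁ * a y d₂ + ε * ∑ m, ∑ n, c₁ m * c₂ n * ∫ ω, ψ ω m * ψ ω n)
      = ε * (∑ m, ∑ n, c₁ m * c₂ n * (∫ ω, ζ ω m * ζ ω n)
          - ∑ m, ∑ n, c₁ m * c₂ n * (∫ ω, ψ ω m * ψ ω n)) := by ring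
  rw [hfinal, abs_mul, abs_of_nonneg hεle]
  calc ε * |∑ m, ∑ n, c₁ m * c₂ n * (∫ ω, ζ ω m * ζ ω n)
        - ∑ m, ∑ n, c₁ m * c₂ n * (∫ ω, ψ ω m * ψ ω n)|
      ≤ ε * ((M + S * M ^ 2) * (C * (1 + ‖y‖)) ^ 2) :=
        mul_le_mul_of_nonneg_left hbound hεle
    _ ≤ ε * ((M + S * M ^ 2) * (C ^ 2 * (2 * (1 + ‖y‖ ^ 2)))) := by
        refine mul_le_mul_of_nonneg_left (mul_le_mul_of_nonneg_left ?_ (by positivity)) hεle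
        rw [mul_pow]
        exact mul_le_mul_of_nonneg_left hsq2 (by positivity)
    _ = 2 * C ^ 2 * (M + S * M ^ 2) * (1 + ‖y‖ ^ 2) * ε := by ring
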